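/- Let J be the M×M Jordan block (M ≥ 2) with eigenvalue λ ∈ ℂ. Then the numerical abscissa of J equals Re(λ) + cos(π/(M+1)). -/

import Mathlib

open scoped Matrix
open Complex Real

/-- The numerical range of a square complex matrix. -/
def numRange {N : ℕ} (M : Matrix (Fin N) (Fin N) ℂ) : Set ℂ :=
  {z | ∃ x : EuclideanSpace ℂ (Fin N), ‖x‖ = 1 ∧ star (x : Fin N → ℂ) ⬝ᵥ M.mulVec x = z}

/-- The numerical abscissa of a square complex matrix. -/
noncomputable def numAbs {N : ℕ} (M : Matrix (Fin N) (Fin N) ℂ) : ℝ :=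
  sSup {r : ℝ | ∃ x : EuclideanSpace ℂ (Fin N), ‖x‖ = 1 ∧ (star (x : Fin N → ℂ) ⬝ᵥ M.mulVec x).re = r}

/-- The spectral (operator 2-)norm of a square complex matrix. -/
noncomputable def spec2 {N : ℕ} (M : Matrix (Fin N) (Fin N) ℂ) : ℝ :=
  ‖Matrix.toEuclideanCLM (𝕜 := ℂ) M‖

/-- The squared Frobenius norm of a square complex matrix. -/
noncomputable def frobSq {N : ℕ} (M : Matrix (Fin N) (Fin N) ℂ) : ℝ :=
  ∑ i, ∑ j, ‖M i j‖ ^ 2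

/-- The M×M Jordan block with eigenvalue λ. -/
def jordanBlock (M : ℕ) (lam : ℂ) : Matrix (Fin M) (Fin M) ℂ :=
  Matrix.of fun i j => if i = j then lam else if (i : ℕ) + 1 = (j : ℕ) then 1 else 0

open Finset

variable {M : ℕ}

noncomputable def th (M : ℕ) : ℝ := Real.pi / (M + 1)
noncomputable def sn (M k : ℕ) : ℝ := Real.sin (k * th M)

lemma th_pos : 0 < th M := div_pos Real.pi_pos (by positivity)

lemma sn_zero : sn M 0 = 0 := by simp [sn]

lemma sn_top : sn M (M + 1) = 0 := by
  have h : ((M:ℝ) + 1) * th M = Real.pi := by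
    rw [th]; field_simp
  simp [sn, h]

lemma sn_pos {k : ℕ} (h1 : 1 ≤ k) (h2 : k ≤ M) : 0 < sn M k := by
  apply Real.sin_pos_of_pos_of_lt_pi
  · have hk : 0 < (k:ℝ) := by exact_mod_cast h1
    exact mul_pos hk th_pos
  · calc (k:ℝ) * th M ≤ M * th M := by
          apply mul_le_mul_of_nonneg_right (by exact_mod_cast h2) th_pos.le
        _ < (M + 1) * th M := by nlinarith [th_pos (M := M)]
        _ = Real.pi := by rw [th]; field_simp

lemma sn_rec (k : ℕ) : sn M k + sn M (k + 2) = 2 * Real.cos (th M) * sn M (k + 1) := by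
  have h1 : (k : ℝ) * th M = (k + 1) * th M - th M := by ring
  have h2 : ((k : ℕ) + 2 : ℕ) * th M = ((k:ℝ) + 1) * th M + th M := by push_cast; ring
  rw [sn, sn, sn, h1, h2, Real.sin_sub, Real.sin_add]
  push_cast
  ring

lemma amgm (a b r : ℝ) (hr : 0 < r) : a * b ≤ (r * a^2 + b^2 / r) / 2 := by
  have h : 2*a*b - r*a^2 ≤ b^2/r := by
    rw [le_div_iff₀ hr]; nlinarith [sq_nonneg (r*a - b)]
  linarith

lemma sum_attain (hM : 2 ≤ M) :
    ∑ k ∈ range M, sn M (k+1) * sn M (k+2)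
      = Real.cos (th M) * ∑ k ∈ range M, sn M (k+1)^2 := by
  have hA : ∑ k ∈ range (M+1), sn M k * sn M (k+1)
      = ∑ k ∈ range M, sn M (k+1) * sn M (k+2) := by
    rw [Finset.sum_range_succ']; simp [sn_zero]
  have hB : ∑ k ∈ range (M+1), sn M k * sn M (k+1)
      = ∑ k ∈ range M, sn M k * sn M (k+1) := by
    rw [Finset.sum_range_succ]; simp [sn_top]
  have hC : ∑ k ∈ range M, (sn M k * sn M (k+1) + sn M (k+1) * sn M (k+2))
      = ∑ k ∈ range M, 2 * Real.cos (th M) * sn M (k+1)^2 := by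
    refine Finset.sum_congr rfl fun k _ => ?_
    have h := sn_rec (M := M) k
    linear_combination sn M (k+1) * h
  rw [Finset.sum_add_distrib] at hC
  have hD : ∑ k ∈ range M, 2 * Real.cos (th M) * sn M (k+1)^2
      = 2 * Real.cos (th M) * ∑ k ∈ range M, sn M (k+1)^2 := by
    rw [Finset.mul_sum]
  linarith [hA, hB, hC, hD]

lemma sum_ub (hM : 2 ≤ M) (y : ℕ → ℂ) (hy : y M = 0) :
    ∑ k ∈ range M, (starRingEnd ℂ (y k) * y (k+1)).re
      ≤ Real.cos (th M) * ∑ k ∈ range M, ‖y k‖^2 := by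
  set c := Real.cos (th M) with hc
  -- termwise bound
  have step : ∀ k ∈ range M, (starRingEnd ℂ (y k) * y (k+1)).re
      ≤ (sn M (k+2) / sn M (k+1)) * ‖y k‖^2 / 2
        + (sn M (k+1) / sn M (k+2)) * ‖y (k+1)‖^2 / 2 := by
    intro k hk
    rw [Finset.mem_range] at hk
    by_cases hkM : k + 1 < M
    · have h1 : 0 < sn M (k+1) := sn_pos (by omega) (by omega)
      have h2 : 0 < sn M (k+2) := sn_pos (by omega) (by omega)
      have hre : (starRingEnd ℂ (y k) * y (k+1)).re ≤ ‖y k‖ * ‖y (k+1)‖ := by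
        calc (starRingEnd ℂ (y k) * y (k+1)).re ≤ ‖starRingEnd ℂ (y k) * y (k+1)‖ :=
              Complex.re_le_norm _
          _ = ‖y k‖ * ‖y (k+1)‖ := by rw [norm_mul, Complex.norm_conj]
      have hr : 0 < sn M (k+2) / sn M (k+1) := div_pos h2 h1
      have := amgm ‖y k‖ ‖y (k+1)‖ (sn M (k+2) / sn M (k+1)) hr
      have hdiv : ‖y (k+1)‖^2 / (sn M (k+2) / sn M (k+1))
          = (sn M (k+1) / sn M (k+2)) * ‖y (k+1)‖^2 := by
        field_simp
      calc (starRingEnd ℂ (y k) * y (k+1)).re ≤ ‖y k‖ * ‖y (k+1)‖ := hre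
        _ ≤ ((sn M (k+2) / sn M (k+1)) * ‖y k‖^2 + ‖y (k+1)‖^2 / (sn M (k+2) / sn M (k+1))) / 2 := this
        _ = _ := by rw [hdiv]; ring
    · have hk1 : k + 1 = M := by omega
      have hy1 : y (k+1) = 0 := by rw [hk1]; exact hy
      have hs : sn M (k+2) = 0 := by
        have : k + 2 = M + 1 := by omega
        rw [this]; exact sn_top
      simp [hy1, hs]
  have hsum := Finset.sum_le_sum step
  refine le_trans hsum ?_
  -- rearrange the right side
  have hsplit : ∑ k ∈ range M, ((sn M (k+2) / sn M (k+1)) * ‖y k‖^2 / 2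
        + (sn M (k+1) / sn M (k+2)) * ‖y (k+1)‖^2 / 2)
      = (∑ k ∈ range M, (sn M (k+2) / sn M (k+1)) * ‖y k‖^2 / 2)
        + ∑ k ∈ range M, (sn M (k+1) / sn M (k+2)) * ‖y (k+1)‖^2 / 2 :=
    Finset.sum_add_distrib
  set d : ℕ → ℝ := fun k => (sn M k / sn M (k+1)) * ‖y k‖^2 / 2 with hd
  have hshift : ∑ k ∈ range M, (sn M (k+1) / sn M (k+2)) * ‖y (k+1)‖^2 / 2
      = ∑ k ∈ range M, d k := by
    have h1 : ∑ k ∈ range (M+1), d k = (∑ k ∈ range M, d (k+1)) + d 0 :=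
      Finset.sum_range_succ' d M
    have h2 : ∑ k ∈ range (M+1), d k = (∑ k ∈ range M, d k) + d M :=
      Finset.sum_range_succ d M
    have hd0 : d 0 = 0 := by simp [hd, sn_zero]
    have hdM : d M = 0 := by simp [hd, hy]
    have : ∑ k ∈ range M, d (k+1) = ∑ k ∈ range M, d k := by
      linarith [h1, h2, hd0, hdM]
    simpa [hd] using this
  rw [hsplit, hshift, ← Finset.sum_add_distrib, Finset.mul_sum]
  refine Finset.sum_le_sum fun k hk => ?_
  rw [Finset.mem_range] at hk
  have h1 : 0 < sn M (k+1) := sn_pos (by omega) (by omega)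
  have hrec := sn_rec (M := M) k
  rw [hd]
  have : (sn M (k+2) / sn M (k+1)) * ‖y k‖^2 / 2 + (sn M k / sn M (k+1)) * ‖y k‖^2 / 2
      = ((sn M k + sn M (k+2)) / sn M (k+1)) * ‖y k‖^2 / 2 := by
    field_simp; ring
  rw [this, hrec]
  apply le_of_eq
  field_simp
  ring

noncomputable def ext' (x : Fin M → ℂ) : ℕ → ℂ := fun k => if h : k < M then x ⟨k, h⟩ else 0

lemma ext'_coe (x : Fin M → ℂ) (i : Fin M) : ext' x (i : ℕ) = x i := by
  rw [ext', dif_pos i.isLt]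

lemma ext'_ge (x : Fin M → ℂ) {k : ℕ} (h : M ≤ k) : ext' x k = 0 := by
  rw [ext', dif_neg (by omega)]

lemma mulVec_jordan (lam : ℂ) (x : Fin M → ℂ) (i : Fin M) :
    (jordanBlock M lam).mulVec x i = lam * x i + ext' x ((i : ℕ) + 1) := by
  rw [Matrix.mulVec, dotProduct]
  have hsplit : ∀ j : Fin M, jordanBlock M lam i j * x j
      = (if i = j then lam * x j else 0) + (if (i : ℕ) + 1 = (j : ℕ) then x j else 0) := by
    intro j
    rw [jordanBlock]
    by_cases h1 : i = j
    · have h2 : ¬ ((i:ℕ) + 1 = (j:ℕ)) := by subst h1; omega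
      simp [h1, h2]
    · by_cases h2 : (i:ℕ) + 1 = (j:ℕ) <;> simp [h1, h2]
  rw [Finset.sum_congr rfl (fun j _ => hsplit j), Finset.sum_add_distrib]
  congr 1
  · rw [Finset.sum_ite_eq]; simp
  · by_cases h : (i : ℕ) + 1 < M
    · rw [ext', dif_pos h]
      rw [Finset.sum_eq_single (⟨(i:ℕ)+1, h⟩ : Fin M)]
      · simp
      · intro j _ hj
        rw [if_neg]
        intro hc
        exact hj (by ext; simp [← hc])
      · simp
    · rw [ext'_ge x (by omega)]
      apply Finset.sum_eq_zero
      intro j _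
      rw [if_neg]
      intro hc
      omega

lemma expand_re (lam : ℂ) (x : Fin M → ℂ) :
    (star x ⬝ᵥ (jordanBlock M lam).mulVec x).re
      = lam.re * ∑ k ∈ range M, ‖ext' x k‖^2
        + ∑ k ∈ range M, (starRingEnd ℂ (ext' x k) * ext' x (k+1)).re := by
  have h1 : star x ⬝ᵥ (jordanBlock M lam).mulVec x
      = lam * (↑(∑ i : Fin M, ‖x i‖^2) : ℂ)
        + ∑ i : Fin M, starRingEnd ℂ (x i) * ext' x ((i:ℕ)+1) := by
    rw [dotProduct]
    have : ∀ i : Fin M, star x i * (jordanBlock M lam).mulVec x i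
        = lam * (↑(‖x i‖^2) : ℂ) + starRingEnd ℂ (x i) * ext' x ((i:ℕ)+1) := by
      intro i
      rw [mulVec_jordan, Pi.star_apply, Complex.star_def, mul_add]
      congr 1
      calc starRingEnd ℂ (x i) * (lam * x i) = lam * (x i * starRingEnd ℂ (x i)) := by ring
        _ = lam * ↑(Complex.normSq (x i)) := by rw [Complex.mul_conj]
        _ = lam * (↑(‖x i‖^2) : ℂ) := by
            rw [Complex.normSq_eq_norm_sq]
    rw [Finset.sum_congr rfl fun i _ => this i, Finset.sum_add_distrib, ← Finset.mul_sum]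
    push_cast
    ring
  rw [h1]
  rw [Complex.add_re]
  congr 1
  · rw [Complex.mul_re]
    simp only [Complex.ofReal_re, Complex.ofReal_im, mul_zero, sub_zero]
    congr 1
    have : ∀ i : Fin M, ‖x i‖^2 = (fun k => ‖ext' x k‖^2) (i : ℕ) := by
      intro i; simp only [ext'_coe]
    rw [Finset.sum_congr rfl fun i _ => this i]
    exact Fin.sum_univ_eq_sum_range (fun k => ‖ext' x k‖^2) M
  · rw [Complex.re_sum]
    have : ∀ i : Fin M, (starRingEnd ℂ (x i) * ext' x ((i:ℕ)+1)).re
        = (fun k => (starRingEnd ℂ (ext' x k) * ext' x (k+1)).re) (i : ℕ) := by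
      intro i; simp only [ext'_coe]
    rw [Finset.sum_congr rfl fun i _ => this i]
    exact Fin.sum_univ_eq_sum_range (fun k => (starRingEnd ℂ (ext' x k) * ext' x (k+1)).re) M

lemma norm_one_sum (x : EuclideanSpace ℂ (Fin M)) (hx : ‖x‖ = 1) :
    ∑ k ∈ range M, ‖ext' (x : Fin M → ℂ) k‖^2 = 1 := by
  have h := EuclideanSpace.norm_eq x
  rw [hx] at h
  have h2 : ∑ i : Fin M, ‖x i‖^2 = 1 := Real.sqrt_eq_one.mp h.symm
  have h3 : ∀ i : Fin M, ‖x i‖^2 = (fun k => ‖ext' (x : Fin M → ℂ) k‖^2) (i:ℕ) := by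
    intro i; simp only [ext'_coe]
  rw [Finset.sum_congr rfl fun i _ => h3 i,
    Fin.sum_univ_eq_sum_range (fun k => ‖ext' (x : Fin M → ℂ) k‖^2) M] at h2
  exact h2

/-- The numerical abscissa of the M×M Jordan block (M ≥ 2) with eigenvalue λ is
Re(λ) + cos(π/(M+1)). -/
theorem stmt16 (M : ℕ) (hM : 2 ≤ M) (lam : ℂ) :
    numAbs (jordanBlock M lam) = lam.re + Real.cos (Real.pi / (M + 1)) := by
  have hcos : Real.cos (Real.pi / (M + 1)) = Real.cos (th M) := rfl
  rw [numAbs, hcos]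
  apply IsGreatest.csSup_eq
  constructor
  · -- membership: the optimal vector
    set T := ∑ k ∈ range M, sn M (k+1)^2 with hTdef
    have hT : 0 < T := by
      apply Finset.sum_pos' (fun k _ => sq_nonneg _)
      exact ⟨0, Finset.mem_range.mpr (by omega),
        pow_pos (sn_pos le_rfl (by omega)) 2⟩
    set a : ℝ := (Real.sqrt T)⁻¹ with ha
    have ha2 : a^2 = T⁻¹ := by
      rw [ha, ← Real.sqrt_inv, Real.sq_sqrt (by positivity)]
    refine ⟨(WithLp.equiv 2 (Fin M → ℂ)).symm
      (fun i => ((a * sn M ((i:ℕ)+1) : ℝ) : ℂ)), ?_, ?_⟩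
    · rw [EuclideanSpace.norm_eq]
      have : ∀ i : Fin M,
          ‖(WithLp.equiv 2 (Fin M → ℂ)).symm (fun i => ((a * sn M ((i:ℕ)+1) : ℝ) : ℂ)) i‖^2
          = (fun k => a^2 * sn M (k+1)^2) (i:ℕ) := by
        intro i
        simp only [WithLp.equiv_symm_apply, WithLp.ofLp_toLp, Complex.norm_real]
        rw [Real.norm_eq_abs, _root_.sq_abs, mul_pow]
      rw [Finset.sum_congr rfl fun i _ => this i,
        Fin.sum_univ_eq_sum_range (fun k => a^2 * sn M (k+1)^2) M,
        ← Finset.mul_sum, ← hTdef, ha2, inv_mul_cancel₀ hT.ne', Real.sqrt_one]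
    · set x : Fin M → ℂ := fun i => ((a * sn M ((i:ℕ)+1) : ℝ) : ℂ) with hxdef
      have hcoe : ((WithLp.equiv 2 (Fin M → ℂ)).symm x : Fin M → ℂ) = x := rfl
      rw [hcoe, expand_re]
      have hval : ∀ k, k < M → ext' x k = ((a * sn M (k+1) : ℝ) : ℂ) := by
        intro k hk
        rw [ext', dif_pos hk]
      have hS1 : ∑ k ∈ range M, ‖ext' x k‖^2 = 1 := by
        have h1 : ∀ k ∈ range M, ‖ext' x k‖^2 = a^2 * sn M (k+1)^2 := by
          intro k hk
          rw [hval k (Finset.mem_range.mp hk), Complex.norm_real, Real.norm_eq_abs,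
            _root_.sq_abs, mul_pow]
        rw [Finset.sum_congr rfl h1, ← Finset.mul_sum, ← hTdef, ha2,
          inv_mul_cancel₀ hT.ne']
      have hS2 : ∑ k ∈ range M, (starRingEnd ℂ (ext' x k) * ext' x (k+1)).re
          = Real.cos (th M) := by
        have hterm : ∀ k ∈ range M, (starRingEnd ℂ (ext' x k) * ext' x (k+1)).re
            = a^2 * (sn M (k+1) * sn M (k+2)) := by
          intro k hk
          rw [Finset.mem_range] at hk
          rw [hval k hk]
          by_cases h : k + 1 < M
          · rw [hval (k+1) h, Complex.conj_ofReal, ← Complex.ofReal_mul,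
              Complex.ofReal_re]
            ring
          · have hk1 : k + 1 = M := by omega
            have h0 : ext' x (k+1) = 0 := ext'_ge x (by omega)
            have hs : sn M (k+2) = 0 := by
              have : k + 2 = M + 1 := by omega
              rw [this]; exact sn_top
            simp [h0, hs]
        rw [Finset.sum_congr rfl hterm, ← Finset.mul_sum, sum_attain hM, ← hTdef, ha2]
        field_simp
      rw [hS1, hS2]
      ring
  · -- upper bound
    rintro r ⟨x, hx, rfl⟩
    rw [expand_re, norm_one_sum x hx, mul_one]
    have := sum_ub hM (ext' (x : Fin M → ℂ)) (ext'_ge _ le_rfl)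
    rw [norm_one_sum x hx, mul_one] at this
    linarith
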